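/- Suppose S_n is a good orientable sequence of order n with odd weight and period m_n, and recursively define S_{i+1} = E(D^{-1}(S_i)) for i ≥ n (taking the single sequence in D^{-1}(S_i) and applying E), and let m_i denote the period of S_i for i > n. Then S_i is a good orientable sequence of order i of odd weight for every i ≥ n, and for every j ≥ 0: if m_n is odd then m_{n+2j+1} = 2·m_{n+2j} and m_{n+2j+2} = 2·m_{n+2j+1} + 1, while if m_n is even then m_{n+2j+1} = 2·m_{n+2j} + 1 and m_{n+2j+2} = 2·m_{n+2j+1}. -/

import Mathlib

/-- A sequence has `m` as a (not necessarily least) period. -/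
def hasPer (s : ℕ → Bool) (m : ℕ) : Prop := ∀ i, s (i + m) = s i

/-- `m` is the (least positive) period of `s`. -/
def isPeriod (s : ℕ → Bool) (m : ℕ) : Prop :=
  0 < m ∧ hasPer s m ∧ ∀ k, 0 < k → hasPer s k → m ≤ k

/-- The `n`-tuple appearing at position `i` of `s`. -/
def tup (s : ℕ → Bool) (n i : ℕ) : Fin n → Bool := fun k => s (i + (k : ℕ))

/-- The reverse of an `n`-tuple. -/
def tupRev {n : ℕ} (u : Fin n → Bool) : Fin n → Bool := fun k => u k.rev

/-- An `n`-window sequence of period `m`. -/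
def isNWindow (s : ℕ → Bool) (n m : ℕ) : Prop :=
  isPeriod s m ∧ ∀ i j, tup s n i = tup s n j → i ≡ j [MOD m]

/-- The weight of (one period of) `s`. -/
def wt (s : ℕ → Bool) (m : ℕ) : ℕ := ∑ i ∈ Finset.range m, (if s i then 1 else 0)

/-- The complement of a sequence. -/
def seqCompl (s : ℕ → Bool) : ℕ → Bool := fun i => !(s i)

/-- Two sequences are disjoint if they share no `n`-tuple. -/
def disjointSeq (s t : ℕ → Bool) (n : ℕ) : Prop := ∀ i j, tup s n i ≠ tup t n j

/-- A sequence is primitive if it is disjoint from its complement. -/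
def primitiveSeq (s : ℕ → Bool) (n : ℕ) : Prop := disjointSeq s (seqCompl s) n

/-- An orientable sequence of order `n` and period `m`. -/
def isOrientable (s : ℕ → Bool) (n m : ℕ) : Prop :=
  isNWindow s n m ∧ ∀ i j, tup s n i ≠ tupRev (tup s n j)

/-- Two sequences are o-disjoint: disjoint, and no `n`-tuple of one is the
reverse of an `n`-tuple of the other. -/
def oDisjoint (s t : ℕ → Bool) (n : ℕ) : Prop :=
  disjointSeq s t n ∧ ∀ i j, tup s n i ≠ tupRev (tup t n j)

/-- The Lempel homomorphism `D` on periodic sequences. -/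
def Dmap (t : ℕ → Bool) : ℕ → Bool := fun i => xor (t i) (t (i + 1))

/-- The set `D⁻¹(s)` of sequences mapping to `s` under `D`. -/
def Dinv (s : ℕ → Bool) : Set (ℕ → Bool) := { t | Dmap t = s }

/-- `1^len` occurs at position `i` of `s`. -/
def occOnes (s : ℕ → Bool) (len i : ℕ) : Prop := ∀ k, k < len → s (i + k) = true

/-- `0^len` occurs at position `i` of `s`. -/
def occZeros (s : ℕ → Bool) (len i : ℕ) : Prop := ∀ k, k < len → s (i + k) = false

/-- The periodic sequence of period dividing `m + 1` obtained from the generating cycle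
`[s_0, ..., s_{r-1}, 1, s_r, ..., s_{m-1}]`, i.e. by inserting an extra `1` at
position `r` of the generating cycle `[s_0, ..., s_{m-1}]`. -/
def insertAt (s : ℕ → Bool) (m r : ℕ) : ℕ → Bool := fun i =>
  if i % (m + 1) < r then s (i % (m + 1))
  else if i % (m + 1) = r then true
  else s (i % (m + 1) - 1)

/-- A good orientable sequence: an `OS(n)` of period `m` in which the tuple
`0^(n-4)` occurs exactly once in a period. -/
def goodOS (s : ℕ → Bool) (n m : ℕ) : Prop :=
  isOrientable s n m ∧ ∃! i, i < m ∧ occZeros s (n - 4) i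

/-- One step of the recursion `S' = E(D⁻¹(S))`: some `t ∈ D⁻¹(S)` (where `S` has
period `m` and hence `t` has period `2m`) contains exactly one occurrence of the
tuple `1^(k-4)` in a period, at position `r`, and `S'` is `t` if `t` has odd
weight and otherwise is obtained from `t` by inserting an extra `1` there. -/
def EDinvStep (s : ℕ → Bool) (m k : ℕ) (s' : ℕ → Bool) : Prop :=
  ∃ t ∈ Dinv s, ∃ r, r < 2 * m ∧ occOnes t (k - 4) r ∧
    (∀ i, i < 2 * m → occOnes t (k - 4) i → i = r) ∧
    s' = if Odd (wt t (2 * m)) then t else insertAt t (2 * m) r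

section OS2helpers

variable {s t : ℕ → Bool} {m N n L a b : ℕ}

lemma OS2_hasPer_add_mul (h : hasPer s m) : ∀ (q x : ℕ), s (x + m * q) = s x := by
  intro q
  induction q with
  | zero => simp
  | succ q ih =>
    intro x
    have : x + m * (q + 1) = (x + m * q) + m := by ring
    rw [this, h, ih]

lemma OS2_hasPer_mod (h : hasPer s m) (hm : 0 < m) (x : ℕ) : s x = s (x % m) := by
  conv_lhs => rw [show x = x % m + m * (x / m) from by rw [Nat.mod_add_div]]
  rw [OS2_hasPer_add_mul h]

lemma OS2_hasPer_modEq (h : hasPer s m) (hm : 0 < m) (hab : a ≡ b [MOD m]) :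
    s a = s b := by
  rw [OS2_hasPer_mod h hm a, OS2_hasPer_mod h hm b, hab]

lemma OS2_tup_eq_iff : tup s n a = tup s n b ↔ ∀ j, j < n → s (a + j) = s (b + j) := by
  constructor
  · intro h j hj
    exact congrFun h ⟨j, hj⟩
  · intro h
    funext ⟨j, hj⟩
    exact h j hj

lemma OS2_tupRev_eq_iff :
    tup s n a = tupRev (tup s n b) ↔ ∀ j, j < n → s (a + j) = s (b + (n - 1 - j)) := by
  constructor
  · intro h j hj
    have := congrFun h ⟨j, hj⟩
    simpa [tup, tupRev, Fin.rev, Nat.sub_sub, Nat.add_comm 1 j] using this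
  · intro h
    funext ⟨j, hj⟩
    simpa [tup, tupRev, Fin.rev, Nat.sub_sub, Nat.add_comm 1 j] using h j hj

lemma OS2_tup_modEq (h : hasPer s N) (hN : 0 < N) (hab : a ≡ b [MOD N]) :
    tup s n a = tup s n b := by
  rw [OS2_tup_eq_iff]
  intro j hj
  exact OS2_hasPer_modEq h hN (Nat.ModEq.add_right j hab)

lemma OS2_occOnes_modEq (h : hasPer s N) (hN : 0 < N) (hab : a ≡ b [MOD N])
    (ho : occOnes s L a) : occOnes s L b := by
  intro j hj
  rw [← ho j hj]
  exact OS2_hasPer_modEq h hN (Nat.ModEq.add_right j hab.symm)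

lemma OS2_occZeros_modEq (h : hasPer s N) (hN : 0 < N) (hab : a ≡ b [MOD N])
    (ho : occZeros s L a) : occZeros s L b := by
  intro j hj
  rw [← ho j hj]
  exact OS2_hasPer_modEq h hN (Nat.ModEq.add_right j hab.symm)

lemma OS2_isPeriod_unique (ha : isPeriod s a) (hb : isPeriod s b) : a = b :=
  le_antisymm (ha.2.2 b hb.1 hb.2.1) (hb.2.2 a ha.1 ha.2.1)

lemma OS2_window_isPeriod (h : hasPer s N) (hN : 0 < N)
    (hw : ∀ a b, tup s n a = tup s n b → a ≡ b [MOD N]) : isPeriod s N := by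
  refine ⟨hN, h, fun q hq hqper => ?_⟩
  have : tup s n q = tup s n 0 := by
    rw [OS2_tup_eq_iff]
    intro j hj
    have := hqper j
    simpa [Nat.add_comm] using this
  have h0 : q ≡ 0 [MOD N] := hw q 0 this
  have : N ∣ q := (Nat.modEq_zero_iff_dvd).mp h0
  exact Nat.le_of_dvd hq this

end OS2helpers
def OS2cnt (s : ℕ → Bool) (i j : ℕ) : ℕ := ∑ l ∈ Finset.range j, (if s (i + l) then 1 else 0)

lemma OS2cnt_zero {s : ℕ → Bool} {i : ℕ} : OS2cnt s i 0 = 0 := by simp [OS2cnt]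

lemma OS2cnt_succ {s : ℕ → Bool} {i j : ℕ} :
    OS2cnt s i (j + 1) = OS2cnt s i j + (if s (i + j) then 1 else 0) :=
  Finset.sum_range_succ _ _

lemma OS2cnt_shift {s : ℕ → Bool} {i j : ℕ} :
    OS2cnt s i (j + 1) = (if s i then 1 else 0) + OS2cnt s (i + 1) j := by
  rw [OS2cnt, Finset.sum_range_succ']
  rw [Nat.add_comm, OS2cnt]
  congr 1
  · apply Finset.sum_congr rfl
    intro l _
    have h2 : i + (l + 1) = (i + 1) + l := by omega
    rw [h2]

lemma OS2_wt_eq_cnt {s : ℕ → Bool} {m : ℕ} : wt s m = OS2cnt s 0 m := by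
  simp [wt, OS2cnt]

lemma OS2_odd_add_one : ∀ c : ℕ, Odd (c + 1) ↔ ¬ Odd c := by
  intro c; rw [Nat.odd_iff, Nat.odd_iff]; omega

lemma OS2_t_parity {s t : ℕ → Bool} (ht : ∀ i, t (i + 1) = xor (t i) (s i)) (i : ℕ) :
    ∀ j, t (i + j) = if Odd (OS2cnt s i j) then !(t i) else t i := by
  intro j
  induction j with
  | zero => simp [OS2cnt]
  | succ j ihj =>
    have h1 : t (i + (j + 1)) = xor (t (i + j)) (s (i + j)) := by
      have := ht (i + j)
      rw [show i + j + 1 = i + (j + 1) from by omega] at this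
      exact this
    rw [h1, ihj, OS2cnt_succ]
    by_cases hs : s (i + j) = true
    · simp only [hs, if_true]
      by_cases ho : Odd (OS2cnt s i j)
      · rw [if_pos ho, if_neg (by rw [OS2_odd_add_one]; exact not_not_intro ho)]
        cases t i <;> simp
      · rw [if_neg ho, if_pos ((OS2_odd_add_one _).mpr ho)]
        cases t i <;> simp
    · have hs' : s (i + j) = false := by simpa using hs
      simp [hs']

lemma OS2_cnt_period {s : ℕ → Bool} {m : ℕ} (hp : hasPer s m) :
    ∀ i, OS2cnt s i m = wt s m := by
  have hstep : ∀ i, OS2cnt s (i + 1) m = OS2cnt s i m := by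
    intro i
    have h1 : OS2cnt s i (m + 1) = OS2cnt s i m + (if s (i + m) then 1 else 0) := OS2cnt_succ
    have h2 : OS2cnt s i (m + 1) = (if s i then 1 else 0) + OS2cnt s (i + 1) m := OS2cnt_shift
    rw [hp i] at h1
    omega
  intro i
  induction i with
  | zero => exact OS2_wt_eq_cnt.symm
  | succ i ih => rw [hstep, ih]
lemma OS2_good_bounds {s : ℕ → Bool} {k m : ℕ} (hgood : goodOS s k m) :
    5 ≤ k ∧ 2 ≤ m ∧ k ≤ m + 3 ∧ k ≤ 2 * m := by
  obtain ⟨⟨⟨hper, hwin⟩, hor⟩, hz⟩ := hgood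
  have hm0 : 0 < m := hper.1
  have hm1 : m ≠ 1 := by
    intro h1
    have hp1 : hasPer s 1 := h1 ▸ hper.2.1
    have hc : ∀ x, s x = s 0 := by
      intro x
      induction x with
      | zero => rfl
      | succ x ih => rw [hp1 x]; exact ih
    apply hor 0 0
    funext j
    show s (0 + (j : ℕ)) = s (0 + (j.rev : ℕ))
    rw [hc (0 + (j : ℕ)), hc (0 + (j.rev : ℕ))]
  have hm2 : 2 ≤ m := by omega
  obtain ⟨u, ⟨hum, huz⟩, huniq⟩ := hz
  have hk5 : 5 ≤ k := by
    by_contra h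
    have hlen : k - 4 = 0 := by omega
    have h0 : (0 : ℕ) < m ∧ occZeros s (k - 4) 0 :=
      ⟨hm0, by rw [hlen]; intro j hj; omega⟩
    have h1 : (1 : ℕ) < m ∧ occZeros s (k - 4) 1 :=
      ⟨by omega, by rw [hlen]; intro j hj; omega⟩
    have e0 := huniq 0 h0
    have e1 := huniq 1 h1
    omega
  have hmax : s (u + (k - 4)) = true := by
    by_contra hff
    have hff' : s (u + (k - 4)) = false := by simpa using hff
    have hocc : occZeros s (k - 4) ((u + 1) % m) := by
      apply OS2_occZeros_modEq hper.2.1 hm0 (Nat.mod_modEq _ m).symm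
      intro j hj
      rcases Nat.lt_or_ge (1 + j) (k - 4) with h | h
      · have := huz (1 + j) h
        rw [show u + (1 + j) = u + 1 + j from by omega] at this
        exact this
      · have hj1 : u + 1 + j = u + (k - 4) := by omega
        rw [hj1]; exact hff'
    have heq := huniq ((u + 1) % m) ⟨Nat.mod_lt _ hm0, hocc⟩
    have hMeq : (u + 1) ≡ u [MOD m] := by
      show (u + 1) % m = u % m
      rw [heq, Nat.mod_eq_of_lt hum]
    have hdvd : m ∣ 1 := by
      have := (Nat.modEq_iff_dvd' (Nat.le_succ u)).mp hMeq.symm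
      simpa using this
    have := Nat.le_of_dvd (by omega) hdvd
    omega
  have hkm3 : k ≤ m + 3 := by
    by_contra h
    have hlt : (k - 4) % m < k - 4 := by
      have := Nat.mod_lt (k - 4) hm0
      omega
    have hcong : s (u + (k - 4)) = s (u + ((k - 4) % m)) :=
      OS2_hasPer_modEq hper.2.1 hm0 (Nat.ModEq.add_left u (Nat.mod_modEq _ m).symm)
    have := huz ((k - 4) % m) hlt
    rw [hcong, this] at hmax
    exact Bool.false_ne_true hmax
  have hk2m : k ≤ 2 * m := by
    rcases Nat.lt_or_ge k 6 with h6 | h6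
    · by_contra hcon
      have hk : k = 5 := by omega
      have hm : m = 2 := by omega
      apply hor u u
      rw [OS2_tupRev_eq_iff]
      intro j hj
      apply OS2_hasPer_modEq hper.2.1 hm0
      show (u + j) % m = (u + (k - 1 - j)) % m
      rw [hm, hk]
      omega
    · omega
  exact ⟨hk5, hm2, hkm3, hk2m⟩
lemma OS2_modeq_bound {M x y : ℕ} (h : x % M = y % M) (hxy : x < y) (hlt : y - x < M) :
    False := by
  have hd := (Nat.modEq_iff_dvd' (le_of_lt hxy)).mp h
  have := Nat.le_of_dvd (by omega) hd
  omega

lemma OS2_eq_of_modeq_lt {M x y : ℕ} (h : x % M = y % M) (hx : x < M) (hy : y < M) :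
    x = y := by
  rwa [Nat.mod_eq_of_lt hx, Nat.mod_eq_of_lt hy] at h

lemma OS2_sub_cases {x M : ℕ} (hM : 0 < M) (hdvd : M ∣ x) (hx : x < 2 * M) :
    x = 0 ∨ x = M := by
  obtain ⟨c, rfl⟩ := hdvd
  rcases c with _ | _ | c
  · left; simp
  · right; simp
  · exfalso
    have h2 : M * (c + 1 + 1) = M * c + 2 * M := by ring
    omega

lemma OS2_xor_solve : ∀ a b c : Bool, xor a b = c → b = xor a c := by decide
lemma OS2_step {s s' : ℕ → Bool} {k m : ℕ}
    (hgood : goodOS s k m) (hodd : Odd (wt s m))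
    (hstep : EDinvStep s m (k + 1) s') :
    goodOS s' (k + 1) (if Odd m then 2 * m else 2 * m + 1) ∧
      Odd (wt s' (if Odd m then 2 * m else 2 * m + 1)) := by
  obtain ⟨hk5, hm2, hkm3, hk2m⟩ := OS2_good_bounds hgood
  obtain ⟨⟨⟨hsper, hswin⟩, hsor⟩, -⟩ := hgood
  obtain ⟨t, htD, r, hrlt, hrun0, huniq0, hs'def⟩ := hstep
  have hlen : k + 1 - 4 = k - 3 := by omega
  rw [hlen] at hrun0 huniq0
  have hm0 : 0 < m := by omega
  have h2m0 : 0 < 2 * m := by omega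
  have htD' : Dmap t = s := htD
  have hxor : ∀ i, xor (t i) (t (i + 1)) = s i := fun i => congrFun htD' i
  have hts : ∀ i, t (i + 1) = xor (t i) (s i) := fun i => OS2_xor_solve _ _ _ (hxor i)
  have hsx : ∀ i, s i = xor (t i) (t (i + 1)) := fun i => (hxor i).symm
  have hmid : ∀ i, t (i + m) = !(t i) := by
    intro i
    rw [OS2_t_parity hts i m, OS2_cnt_period hsper.2.1 i, if_pos hodd]
  have htper : hasPer t (2 * m) := by
    intro i
    have h1 : i + 2 * m = (i + m) + m := by ring
    rw [h1, hmid, hmid]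
    simp
  -- flanking zeros of the unique ones-run of t
  have hflank1 : t (r + (k - 3)) = false := by
    by_contra hff
    have hff' : t (r + (k - 3)) = true := by simpa using hff
    have hocc : occOnes t (k - 3) ((r + 1) % (2 * m)) := by
      apply OS2_occOnes_modEq htper h2m0 (Nat.mod_modEq _ _).symm
      intro j hj
      rcases Nat.lt_or_ge (1 + j) (k - 3) with h | h
      · have := hrun0 (1 + j) h
        rw [show r + 1 + j = r + (1 + j) from by omega]
        exact this
      · rw [show r + 1 + j = r + (k - 3) from by omega]
        exact hff'
    have heq := huniq0 _ (Nat.mod_lt _ h2m0) hocc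
    have hMeq : (r + 1) % (2 * m) = r % (2 * m) := by
      rw [heq, Nat.mod_eq_of_lt hrlt]
    exact OS2_modeq_bound hMeq.symm (by omega) (by omega)
  have hflank2 : t (r + (2 * m - 1)) = false := by
    by_contra hff
    have hff' : t (r + (2 * m - 1)) = true := by simpa using hff
    have hocc : occOnes t (k - 3) ((r + (2 * m - 1)) % (2 * m)) := by
      apply OS2_occOnes_modEq htper h2m0 (Nat.mod_modEq _ _).symm
      intro j hj
      rcases Nat.eq_zero_or_pos j with rfl | hjpos
      · simpa using hff'
      · have h1 : r + (2 * m - 1) + j = (r + (j - 1)) + 2 * m := by omega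
        rw [h1, htper]
        exact hrun0 (j - 1) (by omega)
    have heq := huniq0 _ (Nat.mod_lt _ h2m0) hocc
    have hMeq : (r + (2 * m - 1)) % (2 * m) = r % (2 * m) := by
      rw [heq, Nat.mod_eq_of_lt hrlt]
    exact OS2_modeq_bound hMeq.symm (by omega) (by omega)
  -- t contains no run of k-2 ones
  have hnorun : ∀ x, ¬ occOnes t (k - 2) x := by
    intro x hx
    have h1 : occOnes t (k - 3) (x % (2 * m)) :=
      OS2_occOnes_modEq htper h2m0 (Nat.mod_modEq _ _).symm
        (fun j hj => hx j (by omega))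
    have h2 : occOnes t (k - 3) ((x + 1) % (2 * m)) := by
      apply OS2_occOnes_modEq htper h2m0 (Nat.mod_modEq _ _).symm
      intro j hj
      rw [show x + 1 + j = x + (1 + j) from by omega]
      exact hx (1 + j) (by omega)
    have e1 := huniq0 _ (Nat.mod_lt _ h2m0) h1
    have e2 := huniq0 _ (Nat.mod_lt _ h2m0) h2
    exact OS2_modeq_bound (e1.trans e2.symm) (by omega) (by omega)
  -- window property of t
  have hTwin : ∀ a b, tup t (k + 1) a = tup t (k + 1) b → a ≡ b [MOD 2 * m] := by
    intro a b h
    rw [OS2_tup_eq_iff] at h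
    have hstup : tup s k a = tup s k b := by
      rw [OS2_tup_eq_iff]
      intro j hj
      rw [hsx (a + j), hsx (b + j), h j (by omega)]
      rw [show a + j + 1 = a + (j + 1) from by omega, show b + j + 1 = b + (j + 1) from by omega,
        h (j + 1) (by omega)]
    have habm : a ≡ b [MOD m] := hswin a b hstup
    have ht0 : t a = t b := by simpa using h 0 (by omega)
    set A := a % (2 * m) with hA
    set B := b % (2 * m) with hB
    have hAB : A % m = B % m := by
      rw [hA, hB, Nat.mod_mod_of_dvd a ⟨2, by ring⟩, Nat.mod_mod_of_dvd b ⟨2, by ring⟩]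
      exact habm
    have htA : t A = t B := by
      rw [← OS2_hasPer_mod htper h2m0 a, ← OS2_hasPer_mod htper h2m0 b]
      exact ht0
    show A = B
    rcases Nat.le_total A B with hle | hle
    · have hd : m ∣ B - A := (Nat.modEq_iff_dvd' hle).mp hAB
      rcases OS2_sub_cases hm0 hd (by have := Nat.mod_lt a h2m0; have := Nat.mod_lt b h2m0; omega)
        with h0 | hm'
      · omega
      · exfalso
        have hBA : B = A + m := by omega
        rw [hBA, hmid] at htA
        simp at htA
    · have hd : m ∣ A - B := (Nat.modEq_iff_dvd' hle).mp hAB.symm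
      rcases OS2_sub_cases hm0 hd (by have := Nat.mod_lt a h2m0; have := Nat.mod_lt b h2m0; omega)
        with h0 | hm'
      · omega
      · exfalso
        have hBA : A = B + m := by omega
        rw [hBA, hmid] at htA
        simp at htA
  -- orientability of t
  have hTor : ∀ a b, tup t (k + 1) a ≠ tupRev (tup t (k + 1) b) := by
    intro a b h
    rw [OS2_tupRev_eq_iff] at h
    have h' : ∀ j, j < k + 1 → t (a + j) = t (b + (k - j)) := by
      intro j hj
      have := h j hj
      rwa [show k + 1 - 1 - j = k - j from by omega] at this
    apply hsor a b
    rw [OS2_tupRev_eq_iff]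
    intro j hj
    rw [hsx (a + j), hsx (b + (k - 1 - j))]
    rw [h' j (by omega)]
    rw [show a + j + 1 = a + (j + 1) from by omega, h' (j + 1) (by omega)]
    rw [show b + (k - (j + 1)) = b + (k - 1 - j) from by omega]
    rw [show b + (k - 1 - j) + 1 = b + (k - j) from by omega]
    exact Bool.xor_comm _ _
  -- weight of t over one period
  have hwt_t : wt t (2 * m) = m := by
    have h1 : wt t (2 * m) = (∑ i ∈ Finset.range m, if t i then 1 else 0)
        + ∑ i ∈ Finset.range m, (if t (m + i) then 1 else 0) := by
      rw [wt, show 2 * m = m + m from by ring, Finset.sum_range_add]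
    have h2 : ∀ i : ℕ, (if t i then (1 : ℕ) else 0) + (if t (m + i) then 1 else 0) = 1 := by
      intro i
      rw [show m + i = i + m from by omega, hmid i]
      cases t i <;> simp
    calc wt t (2 * m)
        = ∑ i ∈ Finset.range m, ((if t i then (1 : ℕ) else 0) + (if t (m + i) then 1 else 0)) := by
          rw [h1, Finset.sum_add_distrib]
      _ = ∑ _i ∈ Finset.range m, 1 := Finset.sum_congr rfl (fun i _ => h2 i)
      _ = m := by simp
  rcases Nat.even_or_odd m with hme | hmo
  case inr =>
    -- odd m : s' = t
    have hcond : Odd (wt t (2 * m)) := by rw [hwt_t]; exact hmo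
    have hs'eq : s' = t := by rw [hs'def, if_pos hcond]
    rw [if_pos hmo, hs'eq]
    refine ⟨⟨⟨⟨OS2_window_isPeriod htper h2m0 hTwin, hTwin⟩, hTor⟩, ?_⟩, ?_⟩
    · simp only [hlen]
      have hzrun : occZeros t (k - 3) (r + m) := by
        intro j hj
        rw [show r + m + j = (r + j) + m from by omega, hmid, hrun0 j hj]
        rfl
      refine ⟨(r + m) % (2 * m),
        ⟨Nat.mod_lt _ h2m0, OS2_occZeros_modEq htper h2m0 (Nat.mod_modEq _ _).symm hzrun⟩, ?_⟩
      rintro x ⟨hx, hxz⟩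
      have hocc1 : occOnes t (k - 3) ((x + m) % (2 * m)) := by
        apply OS2_occOnes_modEq htper h2m0 (Nat.mod_modEq _ _).symm
        intro j hj
        rw [show x + m + j = (x + j) + m from by omega, hmid, hxz j hj]
        rfl
      have heq := huniq0 _ (Nat.mod_lt _ h2m0) hocc1
      have e : ((x + m) % (2 * m) + m) % (2 * m) = (r + m) % (2 * m) := by rw [heq]
      rw [Nat.mod_add_mod] at e
      rw [show x + m + m = x + 2 * m from by ring, Nat.add_mod_right, Nat.mod_eq_of_lt hx] at e
      exact e
    · rw [hwt_t]; exact hmo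
  case inl =>
    -- even m : s' = insertAt t (2m) r
    have hcond : ¬ Odd (wt t (2 * m)) := by
      rw [hwt_t]
      exact (Nat.not_odd_iff_even).mpr hme
    have hs'eq : s' = insertAt t (2 * m) r := by rw [hs'def, if_neg hcond]
    have hifneg : (if Odd m then 2 * m else 2 * m + 1) = 2 * m + 1 :=
      if_neg ((Nat.not_odd_iff_even).mpr hme)
    rw [hifneg]
    have hsN : ∀ i, s' i = if i % (2 * m + 1) < r then t (i % (2 * m + 1))
        else if i % (2 * m + 1) = r then true else t (i % (2 * m + 1) - 1) := by
      intro i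
      rw [hs'eq]
      rfl
    have hper' : hasPer s' (2 * m + 1) := by
      intro i
      rw [hsN, hsN, Nat.add_mod_right]
    have hP2 : ∀ i, i < 2 * m → s' (r + 1 + i) = t (r + i) := by
      intro i hi
      rcases Nat.lt_or_ge (r + 1 + i) (2 * m + 1) with hc | hc
      · rw [hsN, Nat.mod_eq_of_lt hc, if_neg (by omega), if_neg (by omega)]
        congr 1
        omega
      · have hmod : (r + 1 + i) % (2 * m + 1) = r + 1 + i - (2 * m + 1) := by
          rw [Nat.mod_eq_sub_mod hc, Nat.mod_eq_of_lt (by omega)]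
        rw [hsN, hmod, if_pos (by omega)]
        have e : r + i = (r + 1 + i - (2 * m + 1)) + 2 * m := by omega
        rw [e, htper]
    have hs'r : s' r = true := by
      rw [hsN, Nat.mod_eq_of_lt (by omega), if_neg (by omega), if_pos rfl]
    have hs'run : ∀ e, e ≤ k - 3 → s' (r + e) = true := by
      intro e he
      rcases Nat.eq_zero_or_pos e with rfl | hpos
      · simpa using hs'r
      · have h1 := hP2 (e - 1) (by omega)
        rw [show r + 1 + (e - 1) = r + e from by omega] at h1
        rw [h1]
        exact hrun0 (e - 1) (by omega)
    have hs'flank : s' (r + (k - 2)) = false := by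
      have h1 := hP2 (k - 3) (by omega)
      rw [show r + 1 + (k - 3) = r + (k - 2) from by omega] at h1
      rw [h1]
      exact hflank1
    have hCORE : ∀ δ, δ ≤ 2 * m - 4 → ∀ j, j < k + 1 → s' (r + 1 + δ + j) = t (r + δ + j) := by
      intro δ hδ j hj
      rcases Nat.lt_or_ge (δ + j) (2 * m) with hc | hc
      · have h1 := hP2 (δ + j) hc
        rw [show r + 1 + (δ + j) = r + 1 + δ + j from by omega,
          show r + (δ + j) = r + δ + j from by omega] at h1
        exact h1
      · have hidx : r + 1 + δ + j = (r + (δ + j - 2 * m)) + (2 * m + 1) := by omega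
        rw [hidx, hper']
        have hidx2 : r + δ + j = (r + (δ + j - 2 * m)) + 2 * m := by omega
        rw [hidx2, htper]
        rw [hs'run (δ + j - 2 * m) (by omega), hrun0 (δ + j - 2 * m) (by omega)]
    have hAright : ∀ d, d ≤ 3 → ∀ j, d ≤ j → j ≤ k → s' (r + 1 + (2 * m - d) + j) = s' (r + (j - d)) := by
      intro d hd j hdj hjk
      have hidx : r + 1 + (2 * m - d) + j = (r + (j - d)) + (2 * m + 1) := by omega
      rw [hidx, hper']
    have hAleft : ∀ d, d ≤ 3 → ∀ j, j < d → s' (r + 1 + (2 * m - d) + j) = t (r + (2 * m - (d - j))) := by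
      intro d hd j hjd
      have h1 := hP2 (2 * m - d + j) (by omega)
      rw [show r + 1 + (2 * m - d + j) = r + 1 + (2 * m - d) + j from by omega] at h1
      rw [h1]
      congr 1
      omega
    have hAones : ∀ d, d ≤ 3 → ∀ j, d ≤ j → j ≤ d + (k - 3) → s' (r + 1 + (2 * m - d) + j) = true := by
      intro d hd j h1 h2
      rw [hAright d hd j h1 (by omega)]
      exact hs'run (j - d) (by omega)
    have hAzl : ∀ d, d ≤ 3 → 1 ≤ d → s' (r + 1 + (2 * m - d) + (d - 1)) = false := by
      intro d hd h1
      rw [hAleft d hd (d - 1) (by omega), show 2 * m - (d - (d - 1)) = 2 * m - 1 from by omega]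
      exact hflank2
    have hAzr : ∀ d, d ≤ 2 → s' (r + 1 + (2 * m - d) + (d + k - 2)) = false := by
      intro d hd
      rw [hAright d (by omega) (d + k - 2) (by omega) (by omega)]
      rw [show d + k - 2 - d = k - 2 from by omega]
      exact hs'flank
    have hAX : ∀ d, d ≤ 3 → 2 ≤ d → s' (r + 1 + (2 * m - d) + (d - 2)) = t (r + (2 * m - 2)) := by
      intro d hd h2
      rw [hAleft d hd (d - 2) (by omega), show 2 * m - (d - (d - 2)) = 2 * m - 2 from by omega]
    have hAY : ∀ d, d ≤ 1 → s' (r + 1 + (2 * m - d) + (d + k - 1)) = t (r + (k - 2)) := by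
      intro d hd
      rw [hAright d (by omega) (d + k - 1) (by omega) (by omega)]
      rw [show d + k - 1 - d = k - 1 from by omega]
      have h1 := hP2 (k - 2) (by omega)
      rw [show r + 1 + (k - 2) = r + (k - 1) from by omega] at h1
      exact h1
    have hXY : t (r + (2 * m - 2)) ≠ t (r + (k - 2)) := by
      intro hXYeq
      have hval : ∀ j, j ≤ k → t (r + (2 * m - 2) + j) =
          (if j = 0 then t (r + (2 * m - 2)) else if j = 1 then false
            else if j ≤ k - 2 then true else if j = k - 1 then false else t (r + (k - 2))) := by
        intro j hjk
        by_cases h0 : j = 0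
        · subst h0; simp
        by_cases h1 : j = 1
        · subst h1
          rw [show r + (2 * m - 2) + 1 = r + (2 * m - 1) from by omega]
          rw [if_neg (by omega), if_pos rfl]
          exact hflank2
        by_cases h2 : j ≤ k - 2
        · rw [show r + (2 * m - 2) + j = (r + (j - 2)) + 2 * m from by omega, htper]
          rw [hrun0 (j - 2) (by omega), if_neg h0, if_neg h1, if_pos h2]
        by_cases h3 : j = k - 1
        · rw [show r + (2 * m - 2) + j = (r + (k - 3)) + 2 * m from by omega, htper]
          rw [hflank1, if_neg h0, if_neg h1, if_neg h2, if_pos h3]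
        · rw [show r + (2 * m - 2) + j = (r + (k - 2)) + 2 * m from by omega, htper]
          rw [if_neg h0, if_neg h1, if_neg h2, if_neg h3]
      apply hTor (r + (2 * m - 2)) (r + (2 * m - 2))
      rw [OS2_tupRev_eq_iff]
      intro j hj
      rw [show k + 1 - 1 - j = k - j from by omega]
      rw [hval j (by omega), hval (k - j) (by omega)]
      split_ifs <;> first | rfl | omega | exact hXYeq | exact hXYeq.symm
    have hnorm : ∀ a : ℕ, ∃ δ, δ < 2 * m + 1 ∧ a ≡ r + 1 + δ [MOD 2 * m + 1] := by
      intro a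
      refine ⟨(a + (2 * m + 1) * (r + 2) - (r + 1)) % (2 * m + 1), Nat.mod_lt _ (by omega), ?_⟩
      have hge : r + 2 ≤ (2 * m + 1) * (r + 2) := Nat.le_mul_of_pos_left _ (by omega)
      have h4 : r + 1 + ((a + (2 * m + 1) * (r + 2) - (r + 1)) % (2 * m + 1)) ≡ a [MOD 2 * m + 1] := by
        calc r + 1 + ((a + (2 * m + 1) * (r + 2) - (r + 1)) % (2 * m + 1))
            ≡ r + 1 + (a + (2 * m + 1) * (r + 2) - (r + 1)) [MOD 2 * m + 1] :=
              Nat.ModEq.add_left _ (Nat.mod_modEq _ _)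
          _ = a + (2 * m + 1) * (r + 2) := by omega
          _ ≡ a [MOD 2 * m + 1] := Nat.add_mul_mod_self_left a (2 * m + 1) (r + 2)
      exact h4.symm
    have hwin' : ∀ a b, tup s' (k + 1) a = tup s' (k + 1) b → a ≡ b [MOD 2 * m + 1] := by
      intro a b heq
      obtain ⟨δa, hδa, ha⟩ := hnorm a
      obtain ⟨δb, hδb, hb⟩ := hnorm b
      have heq' : tup s' (k + 1) (r + 1 + δa) = tup s' (k + 1) (r + 1 + δb) := by
        rw [← OS2_tup_modEq hper' (by omega) ha, ← OS2_tup_modEq hper' (by omega) hb]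
        exact heq
      rw [OS2_tup_eq_iff] at heq'
      suffices hδ : δa = δb by
        calc a ≡ r + 1 + δa [MOD 2 * m + 1] := ha
          _ = r + 1 + δb := by rw [hδ]
          _ ≡ b [MOD 2 * m + 1] := hb.symm
      by_cases hA : δa ≤ 2 * m - 4 <;> by_cases hB : δb ≤ 2 * m - 4
      · have h1 : tup t (k + 1) (r + δa) = tup t (k + 1) (r + δb) := by
          rw [OS2_tup_eq_iff]
          intro j hj
          rw [← hCORE δa hA j hj, ← hCORE δb hB j hj]
          exact heq' j hj
        have h2 : (r + δa) % (2 * m) = (r + δb) % (2 * m) := hTwin _ _ h1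
        rcases Nat.lt_trichotomy δa δb with h | h | h
        · exact (OS2_modeq_bound h2 (by omega) (by omega)).elim
        · exact h
        · exact (OS2_modeq_bound h2.symm (by omega) (by omega)).elim
      · exfalso
        apply hnorun (r + δa + (2 * m - δb))
        intro c hc
        have hj : (2 * m - δb) + c < k + 1 := by omega
        have h1 := hCORE δa hA ((2 * m - δb) + c) hj
        rw [show r + δa + (2 * m - δb) + c = r + δa + ((2 * m - δb) + c) from by omega, ← h1]
        rw [heq' _ hj]
        have h3 := hAones (2 * m - δb) (by omega) ((2 * m - δb) + c) (by omega) (by omega)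
        rw [show r + 1 + δb + ((2 * m - δb) + c) = r + 1 + (2 * m - (2 * m - δb)) + ((2 * m - δb) + c) from by omega]
        exact h3
      · exfalso
        apply hnorun (r + δb + (2 * m - δa))
        intro c hc
        have hj : (2 * m - δa) + c < k + 1 := by omega
        have h1 := hCORE δb hB ((2 * m - δa) + c) hj
        rw [show r + δb + (2 * m - δa) + c = r + δb + ((2 * m - δa) + c) from by omega, ← h1]
        rw [← heq' _ hj]
        have h3 := hAones (2 * m - δa) (by omega) ((2 * m - δa) + c) (by omega) (by omega)
        rw [show r + 1 + δa + ((2 * m - δa) + c) = r + 1 + (2 * m - (2 * m - δa)) + ((2 * m - δa) + c) from by omega]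
        exact h3
      · by_cases hd : δa = δb
        · exact hd
        exfalso
        rcases Nat.lt_or_ge (2 * m - δa) (2 * m - δb) with hlt | hge
        · have hz := hAzr (2 * m - δa) (by omega)
          rw [show 2 * m - (2 * m - δa) = δa from by omega] at hz
          have ho := hAones (2 * m - δb) (by omega) (2 * m - δa + k - 2) (by omega) (by omega)
          rw [show 2 * m - (2 * m - δb) = δb from by omega] at ho
          have hh := heq' (2 * m - δa + k - 2) (by omega)
          rw [hz, ho] at hh
          exact Bool.false_ne_true hh
        · have hz := hAzr (2 * m - δb) (by omega)
          rw [show 2 * m - (2 * m - δb) = δb from by omega] at hz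
          have ho := hAones (2 * m - δa) (by omega) (2 * m - δb + k - 2) (by omega) (by omega)
          rw [show 2 * m - (2 * m - δa) = δa from by omega] at ho
          have hh := heq' (2 * m - δb + k - 2) (by omega)
          rw [ho, hz] at hh
          exact Bool.false_ne_true hh.symm
    have hor' : ∀ a b, tup s' (k + 1) a ≠ tupRev (tup s' (k + 1) b) := by
      intro a b heq
      obtain ⟨δa, hδa, ha⟩ := hnorm a
      obtain ⟨δb, hδb, hb⟩ := hnorm b
      have e1 : tup s' (k + 1) a = tup s' (k + 1) (r + 1 + δa) :=
        OS2_tup_modEq hper' (by omega) ha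
      have e2 : tup s' (k + 1) b = tup s' (k + 1) (r + 1 + δb) :=
        OS2_tup_modEq hper' (by omega) hb
      have heq2 := heq
      rw [e1, e2] at heq2
      rw [OS2_tupRev_eq_iff] at heq2
      have hrev : ∀ j, j < k + 1 → s' (r + 1 + δa + j) = s' (r + 1 + δb + (k - j)) := by
        intro j hj
        have h5 := heq2 j hj
        rwa [show k + 1 - 1 - j = k - j from by omega] at h5
      by_cases hA : δa ≤ 2 * m - 4 <;> by_cases hB : δb ≤ 2 * m - 4
      · apply hTor (r + δa) (r + δb)
        rw [OS2_tupRev_eq_iff]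
        intro j hj
        rw [show k + 1 - 1 - j = k - j from by omega]
        rw [← hCORE δa hA j hj, ← hCORE δb hB (k - j) (by omega)]
        exact hrev j hj
      · apply hnorun (r + δa + (3 - (2 * m - δb)))
        intro c hc
        have hi : (3 - (2 * m - δb)) + c < k + 1 := by omega
        have h1 := hCORE δa hA ((3 - (2 * m - δb)) + c) hi
        rw [show r + δa + (3 - (2 * m - δb)) + c = r + δa + ((3 - (2 * m - δb)) + c) from by omega,
          ← h1]
        rw [hrev _ hi]
        have h3 := hAones (2 * m - δb) (by omega) (k - ((3 - (2 * m - δb)) + c)) (by omega) (by omega)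
        rw [show 2 * m - (2 * m - δb) = δb from by omega] at h3
        exact h3
      · apply hnorun (r + δb + (3 - (2 * m - δa)))
        intro c hc
        have hi : (3 - (2 * m - δa)) + c < k + 1 := by omega
        have h1 := hCORE δb hB ((3 - (2 * m - δa)) + c) hi
        rw [show r + δb + (3 - (2 * m - δa)) + c = r + δb + ((3 - (2 * m - δa)) + c) from by omega,
          ← h1]
        have hj2 : k - ((3 - (2 * m - δa)) + c) < k + 1 := by omega
        have h2 := hrev _ hj2
        rw [show k - (k - ((3 - (2 * m - δa)) + c)) = (3 - (2 * m - δa)) + c from by omega] at h2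
        rw [← h2]
        have h3 := hAones (2 * m - δa) (by omega) (k - ((3 - (2 * m - δa)) + c)) (by omega) (by omega)
        rw [show 2 * m - (2 * m - δa) = δa from by omega] at h3
        exact h3
      · rcases Nat.lt_trichotomy (3 - (2 * m - δa)) (2 * m - δb) with hlt | heq3 | hgt
        · have hz := hAzl (2 * m - δb) (by omega) (by omega)
          rw [show 2 * m - (2 * m - δb) = δb from by omega] at hz
          have hj4 : k - (2 * m - δb - 1) < k + 1 := by omega
          have h2 := hrev _ hj4
          rw [show k - (k - (2 * m - δb - 1)) = 2 * m - δb - 1 from by omega] at h2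
          have h3 := hAones (2 * m - δa) (by omega) (k - (2 * m - δb - 1)) (by omega) (by omega)
          rw [show 2 * m - (2 * m - δa) = δa from by omega] at h3
          rw [h3, hz] at h2
          exact Bool.false_ne_true h2.symm
        · rcases Nat.lt_or_ge (2 * m - δa) 2 with hda | hda
          · have hY := hAY (2 * m - δa) (by omega)
            rw [show 2 * m - (2 * m - δa) = δa from by omega] at hY
            have hX := hAX (2 * m - δb) (by omega) (by omega)
            rw [show 2 * m - (2 * m - δb) = δb from by omega] at hX
            have hj4 : 2 * m - δa + k - 1 < k + 1 := by omega
            have h2 := hrev _ hj4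
            rw [show k - (2 * m - δa + k - 1) = 2 * m - δb - 2 from by omega] at h2
            rw [hY, hX] at h2
            exact hXY h2.symm
          · have hX := hAX (2 * m - δa) (by omega) (by omega)
            rw [show 2 * m - (2 * m - δa) = δa from by omega] at hX
            have hY := hAY (2 * m - δb) (by omega)
            rw [show 2 * m - (2 * m - δb) = δb from by omega] at hY
            have hj4 : 2 * m - δa - 2 < k + 1 := by omega
            have h2 := hrev _ hj4
            rw [show k - (2 * m - δa - 2) = 2 * m - δb + k - 1 from by omega] at h2
            rw [hX, hY] at h2
            exact hXY h2
        · have hz := hAzr (2 * m - δb) (by omega)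
          rw [show 2 * m - (2 * m - δb) = δb from by omega] at hz
          have hj4 : k - (2 * m - δb + k - 2) < k + 1 := by omega
          have h2 := hrev _ hj4
          rw [show k - (k - (2 * m - δb + k - 2)) = 2 * m - δb + k - 2 from by omega] at h2
          have h3 := hAones (2 * m - δa) (by omega) (k - (2 * m - δb + k - 2)) (by omega) (by omega)
          rw [show 2 * m - (2 * m - δa) = δa from by omega] at h3
          rw [h3, hz] at h2
          exact Bool.false_ne_true h2.symm
    have hwt' : wt s' (2 * m + 1) = m + 1 := by
      have hterm : ∀ i ∈ Finset.range (2 * m + 1), (if s' i then (1 : ℕ) else 0) =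
          (if i < r then (if t i then (1 : ℕ) else 0)
            else if i = r then 1 else (if t (i - 1) then (1 : ℕ) else 0)) := by
        intro i hi
        have hi' := Finset.mem_range.mp hi
        rw [hsN i, Nat.mod_eq_of_lt hi']
        by_cases h1 : i < r
        · simp [h1]
        by_cases h2 : i = r
        · simp [h1, h2]
        · simp [h1, h2]
      rw [wt, Finset.sum_congr rfl hterm, Finset.range_eq_Ico,
        ← Finset.sum_Ico_consecutive _ (Nat.zero_le (r + 1)) (by omega : r + 1 ≤ 2 * m + 1),
        Finset.sum_Ico_succ_top (Nat.zero_le r)]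
      have hp1 : ∑ i ∈ Finset.Ico 0 r, (if i < r then (if t i then (1 : ℕ) else 0)
          else if i = r then 1 else (if t (i - 1) then (1 : ℕ) else 0))
          = ∑ i ∈ Finset.Ico 0 r, (if t i then (1 : ℕ) else 0) := by
        apply Finset.sum_congr rfl
        intro i hi
        have := (Finset.mem_Ico.mp hi).2
        simp [this]
      have hp2 : (if r < r then (if t r then (1 : ℕ) else 0)
          else if r = r then 1 else (if t (r - 1) then (1 : ℕ) else 0)) = 1 := by
        simp
      have hp3 : ∑ i ∈ Finset.Ico (r + 1) (2 * m + 1), (if i < r then (if t i then (1 : ℕ) else 0)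
          else if i = r then 1 else (if t (i - 1) then (1 : ℕ) else 0))
          = ∑ j ∈ Finset.range (2 * m - r), (if t (r + j) then (1 : ℕ) else 0) := by
        rw [Finset.sum_Ico_eq_sum_range, show 2 * m + 1 - (r + 1) = 2 * m - r from by omega]
        apply Finset.sum_congr rfl
        intro j _
        rw [if_neg (by omega), if_neg (by omega), show r + 1 + j - 1 = r + j from by omega]
      have hp5 : (∑ i ∈ Finset.Ico 0 r, (if t i then (1 : ℕ) else 0))
          + ∑ j ∈ Finset.range (2 * m - r), (if t (r + j) then (1 : ℕ) else 0) = wt t (2 * m) := by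
        rw [wt, Finset.range_eq_Ico, Finset.range_eq_Ico,
          ← Finset.sum_Ico_consecutive _ (Nat.zero_le r) (by omega : r ≤ 2 * m)]
        congr 1
        conv_rhs => rw [Finset.sum_Ico_eq_sum_range]
        rw [← Finset.range_eq_Ico]
      rw [hp1, hp2, hp3]
      omega
    refine ⟨⟨⟨⟨OS2_window_isPeriod hper' (by omega) hwin', hwin'⟩, hor'⟩, ?_⟩, ?_⟩
    · simp only [hlen]
      have hz0 : occZeros s' (k - 3) (r + m + 1) := by
        intro j hj
        have h1 := hP2 (m + j) (by omega)
        rw [show r + 1 + (m + j) = r + m + 1 + j from by omega] at h1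
        rw [h1, show r + (m + j) = (r + j) + m from by omega, hmid, hrun0 j hj]
        rfl
      refine ⟨(r + m + 1) % (2 * m + 1), ⟨Nat.mod_lt _ (by omega),
        OS2_occZeros_modEq hper' (by omega) (Nat.mod_modEq _ _).symm hz0⟩, ?_⟩
      rintro x ⟨hx, hxz⟩
      obtain ⟨δ, hδ, hxe⟩ := hnorm x
      have hxz' : occZeros s' (k - 3) (r + 1 + δ) :=
        OS2_occZeros_modEq hper' (by omega) hxe hxz
      rcases Nat.lt_or_ge (2 * m - (k - 3)) δ with hbig | hsmall
      · exfalso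
        have hj : 2 * m - δ < k - 3 := by omega
        have h1 := hxz' (2 * m - δ) hj
        rw [show r + 1 + δ + (2 * m - δ) = r + (2 * m + 1) from by omega, hper', hs'r] at h1
        exact Bool.false_ne_true h1.symm
      · have hzt : occZeros t (k - 3) (r + δ) := by
          intro j hj
          have h1 := hP2 (δ + j) (by omega)
          rw [show r + 1 + (δ + j) = r + 1 + δ + j from by omega,
            show r + (δ + j) = r + δ + j from by omega] at h1
          rw [← h1]
          exact hxz' j hj
        have honesz : occOnes t (k - 3) ((r + δ + m) % (2 * m)) := by
          apply OS2_occOnes_modEq htper h2m0 (Nat.mod_modEq _ _).symm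
          intro j hj
          rw [show r + δ + m + j = (r + δ + j) + m from by omega, hmid, hzt j hj]
          rfl
        have heqr := huniq0 _ (Nat.mod_lt _ h2m0) honesz
        have hMeq : r + (δ + m) ≡ r + 0 [MOD 2 * m] := by
          show (r + (δ + m)) % (2 * m) = (r + 0) % (2 * m)
          rw [show r + (δ + m) = r + δ + m from by omega, heqr, Nat.add_zero,
            Nat.mod_eq_of_lt hrlt]
        have h6 : δ + m ≡ 0 [MOD 2 * m] := Nat.ModEq.add_left_cancel' r hMeq
        have hdvd : (2 * m) ∣ (δ + m) := (Nat.modEq_zero_iff_dvd).mp h6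
        obtain ⟨c, hc⟩ := hdvd
        have hδm : δ = m := by
          rcases c with _ | _ | c
          · omega
          · omega
          · exfalso
            have : 2 * m * (c + 1 + 1) = 2 * m * c + 4 * m := by ring
            omega
        rw [hδm] at hxe
        have h7 : x % (2 * m + 1) = (r + m + 1) % (2 * m + 1) := by
          have h8 := hxe
          rwa [show r + 1 + m = r + m + 1 from by omega] at h8
        rw [Nat.mod_eq_of_lt hx] at h7
        exact h7
    · rw [hwt']
      exact Even.add_one hme
/-- Corollary 2: starting from a good orientable sequence `S_n` of order `n`,
odd weight and period `m_n`, and recursively setting `S_{i+1} = E(D⁻¹(S_i))`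
with `m_i` the period of `S_i`, every `S_i` is a good orientable sequence of
order `i` of odd weight, and for every `j ≥ 0`: if `m_n` is odd then
`m_{n+2j+1} = 2 m_{n+2j}` and `m_{n+2j+2} = 2 m_{n+2j+1} + 1`, while if `m_n` is
even then `m_{n+2j+1} = 2 m_{n+2j} + 1` and `m_{n+2j+2} = 2 m_{n+2j+1}`. -/
theorem recursive_family (n : ℕ) (Seq : ℕ → ℕ → Bool) (per : ℕ → ℕ)
    (hstart : goodOS (Seq n) n (per n)) (hoddw : Odd (wt (Seq n) (per n)))
    (hrec : ∀ i, n ≤ i → EDinvStep (Seq i) (per i) (i + 1) (Seq (i + 1)))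
    (hper : ∀ i, n ≤ i → isPeriod (Seq i) (per i)) :
    (∀ i, n ≤ i → goodOS (Seq i) i (per i) ∧ Odd (wt (Seq i) (per i))) ∧
    ∀ j : ℕ,
      (Odd (per n) →
        per (n + 2 * j + 1) = 2 * per (n + 2 * j) ∧
        per (n + 2 * j + 2) = 2 * per (n + 2 * j + 1) + 1) ∧
      (Even (per n) →
        per (n + 2 * j + 1) = 2 * per (n + 2 * j) + 1 ∧
        per (n + 2 * j + 2) = 2 * per (n + 2 * j + 1)) := by
  have hstep' : ∀ i, n ≤ i → goodOS (Seq i) i (per i) → Odd (wt (Seq i) (per i)) →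
      (goodOS (Seq (i + 1)) (i + 1) (per (i + 1)) ∧ Odd (wt (Seq (i + 1)) (per (i + 1)))) ∧
      per (i + 1) = (if Odd (per i) then 2 * per i else 2 * per i + 1) := by
    intro i hi hg ho
    have H := OS2_step hg ho (hrec i hi)
    have hpe : per (i + 1) = (if Odd (per i) then 2 * per i else 2 * per i + 1) :=
      OS2_isPeriod_unique (hper (i + 1) (by omega)) H.1.1.1.1
    refine ⟨?_, hpe⟩
    rw [hpe]
    exact ⟨H.1, H.2⟩
  have main : ∀ i, n ≤ i → goodOS (Seq i) i (per i) ∧ Odd (wt (Seq i) (per i)) := by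
    intro i hi
    induction i, hi using Nat.le_induction with
    | base => exact ⟨hstart, hoddw⟩
    | succ i hi ih => exact (hstep' i hi ih.1 ih.2).1
  refine ⟨main, ?_⟩
  have hrecur : ∀ i, n ≤ i → per (i + 1) = (if Odd (per i) then 2 * per i else 2 * per i + 1) :=
    fun i hi => (hstep' i hi (main i hi).1 (main i hi).2).2
  have hpar : ∀ j : ℕ, per (n + 2 * j) % 2 = per n % 2 := by
    intro j
    induction j with
    | zero => simp
    | succ j ih =>
      have h1 := hrecur (n + 2 * j) (by omega)
      have h2 := hrecur (n + 2 * j + 1) (by omega)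
      have hidx : n + 2 * (j + 1) = n + 2 * j + 1 + 1 := by ring
      rcases Nat.even_or_odd (per (n + 2 * j)) with hoa | hoa
      · rw [if_neg ((Nat.not_odd_iff_even).mpr hoa)] at h1
        rw [h1] at h2
        rw [if_pos (by rw [Nat.odd_iff]; omega)] at h2
        rw [hidx, h2]
        rw [Nat.even_iff] at hoa
        omega
      · rw [if_pos hoa] at h1
        rw [h1] at h2
        rw [if_neg (by rw [Nat.odd_iff]; omega)] at h2
        rw [hidx, h2]
        rw [Nat.odd_iff] at hoa
        omega
  intro j
  have h1 := hrecur (n + 2 * j) (by omega)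
  have h2 := hrecur (n + 2 * j + 1) (by omega)
  have hidx2 : n + 2 * j + 2 = n + 2 * j + 1 + 1 := by omega
  constructor
  · intro hOn
    have hoa : Odd (per (n + 2 * j)) := by
      rw [Nat.odd_iff] at hOn ⊢
      rw [hpar j]
      exact hOn
    rw [if_pos hoa] at h1
    refine ⟨h1, ?_⟩
    rw [h1] at h2
    rw [if_neg (by rw [Nat.odd_iff]; omega)] at h2
    rw [hidx2, h2, h1]
  · intro hEn
    have hoa : Even (per (n + 2 * j)) := by
      rw [Nat.even_iff] at hEn ⊢
      rw [hpar j]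
      exact hEn
    rw [if_neg ((Nat.not_odd_iff_even).mpr hoa)] at h1
    refine ⟨h1, ?_⟩
    rw [h1] at h2
    rw [if_pos (by rw [Nat.odd_iff]; omega)] at h2
    rw [hidx2, h2, h1]
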